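/- Let LP-extreme alternatives of an individual be ordered by increasing weight, with strictly decreasing incremental efficiencies Δe_j = (s_j − s_{j−1})/(w_j − w_{j−1}). Under a proportional tax-subsidy policy with level τ > 0 and arbitrary baseline A, define post-policy utilities V_j = u_j + τ(s_j − A). Then V_{j−1} ≤ V_j if and only if Δe_j ≥ 1/τ, and V_{j−1} > V_j if and only if Δe_j < 1/τ. Consequently, the utility-maximizing LP-extreme is the largest index j* such that Δe_{j*} ≥ 1/τ (or the first alternative if no such index exists). -/
import Mathlib


/-- under a proportional tax-subsidy policy, V_{j-1} ≤ V_j iff Δe_j ≥ 1/τ,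
and the utility-maximizing LP-extreme is the last one with Δe ≥ 1/τ. -/
theorem stmt7 (m : ℕ) (τ A : ℝ) (u s : ℕ → ℝ)
    (hτ : 0 < τ)
    (hu : ∀ a b, a < b → b < m → u b < u a)
    (hs : ∀ a b, a < b → b < m → s a < s b) :
    (∀ j, j + 1 < m →
      ((u j + τ * (s j - A) ≤ u (j+1) + τ * (s (j+1) - A)) ↔
        (s (j+1) - s j) / (u j - u (j+1)) ≥ 1/τ)) ∧
    (∀ j, j + 1 < m →
      ((u (j+1) + τ * (s (j+1) - A) < u j + τ * (s j - A)) ↔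
        (s (j+1) - s j) / (u j - u (j+1)) < 1/τ)) ∧
    (∀ jstar, jstar < m →
      (∀ j, j + 1 ≤ jstar → (s (j+1) - s j) / (u j - u (j+1)) ≥ 1/τ) →
      (∀ j, jstar ≤ j → j + 1 < m → (s (j+1) - s j) / (u j - u (j+1)) < 1/τ) →
      ∀ j, j < m → u j + τ * (s j - A) ≤ u jstar + τ * (s jstar - A)) := by
  have key : ∀ j, j + 1 < m →
      ((u j + τ * (s j - A) ≤ u (j+1) + τ * (s (j+1) - A)) ↔
        (s (j+1) - s j) / (u j - u (j+1)) ≥ 1/τ) := by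
    intro j hj
    have hup : 0 < u j - u (j+1) := by
      have := hu j (j+1) (Nat.lt_succ_self j) hj
      linarith
    have hdiv : (1:ℝ)/τ ≤ (s (j+1) - s j) / (u j - u (j+1)) ↔
        1 * (u j - u (j+1)) ≤ (s (j+1) - s j) * τ := div_le_div_iff₀ hτ hup
    constructor
    · intro h
      rw [ge_iff_le, hdiv]
      nlinarith
    · intro h
      rw [ge_iff_le, hdiv] at h
      nlinarith
  refine ⟨key, ?_, ?_⟩
  · intro j hj
    have := key j hj
    constructor
    · intro h
      by_contra hc
      push_neg at hc
      exact absurd (this.mpr hc) (by linarith)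
    · intro h
      by_contra hc
      push_neg at hc
      exact absurd (this.mp hc) (by linarith)
  · intro jstar hjm hup hdown j hjlt
    rcases le_or_gt j jstar with hle | hgt
    · -- climb up from j to jstar
      obtain ⟨d, hd⟩ := Nat.le.dest hle
      clear hle hjlt
      induction d generalizing j with
      | zero => simp at hd; subst hd; rfl
      | succ n ih =>
        have h1 : j + 1 < m := by omega
        have step : u j + τ * (s j - A) ≤ u (j+1) + τ * (s (j+1) - A) :=
          (key j h1).mpr (hup j (by omega))
        exact le_trans step (ih (j+1) (by omega))
    · -- descend from j down to jstar
      have down : ∀ d, jstar + d < m →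
          u (jstar + d) + τ * (s (jstar + d) - A) ≤ u jstar + τ * (s jstar - A) := by
        intro d
        induction d with
        | zero => intro _; simp
        | succ n ih =>
          intro hdm
          have hlt : u (jstar + n + 1) + τ * (s (jstar + n + 1) - A)
              < u (jstar + n) + τ * (s (jstar + n) - A) := by
            have hiff := key (jstar + n) (by omega)
            by_contra hc
            push_neg at hc
            have h1 := hiff.mp hc
            have h2 := hdown (jstar + n) (by omega) (by omega)
            linarith
          have := ih (by omega)
          calc u (jstar + (n+1)) + τ * (s (jstar + (n+1)) - A)
              = u (jstar + n + 1) + τ * (s (jstar + n + 1) - A) := by ring_nf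
            _ ≤ u jstar + τ * (s jstar - A) := by linarith
      obtain ⟨d, hd⟩ := Nat.le.dest hgt.le
      have := down d (by omega)
      rw [hd] at this
      exact this
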